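/- Let J be a proper operator ideal in B(H) and let {P_n}_{n≥1} be a decomposition of the identity. Suppose there is a family {E_n}_{n≥1} of diagonal projections such that the series ∑_{n≥1} (I − E_n) P_n and ∑_{n≥1} E_n (I − P_n) converge in the weak operator topology to operators belonging to J. Then P_n − E_n ∈ J for all n ≥ 1. -/

import Mathlib

open Filter Topology
open scoped InnerProductSpace

noncomputable section

variable {H : Type*} [NormedAddCommGroup H] [InnerProductSpace ℂ H] [CompleteSpace H]

/-- A (two-sided) operator ideal of `B(H)`. -/
def IsOpIdeal (J : Set (H →L[ℂ] H)) : Prop :=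
  (0 : H →L[ℂ] H) ∈ J ∧
  (∀ A B : H →L[ℂ] H, A ∈ J → B ∈ J → A + B ∈ J) ∧
  (∀ A B : H →L[ℂ] H, B ∈ J → A * B ∈ J) ∧
  (∀ A B : H →L[ℂ] H, A ∈ J → A * B ∈ J)

/-- A proper operator ideal: `{0} ≠ J ≠ B(H)`. -/
def IsProperOpIdeal (J : Set (H →L[ℂ] H)) : Prop :=
  IsOpIdeal J ∧ J ≠ {0} ∧ J ≠ Set.univ

/-- Orthogonal (self-adjoint, idempotent) projection. -/
def IsOrthogonalProjection (P : H →L[ℂ] H) : Prop :=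
  IsSelfAdjoint P ∧ P * P = P

/-- Diagonal with respect to the fixed orthonormal basis `e`. -/
def IsDiagonalOp (e : HilbertBasis ℕ ℂ H) (A : H →L[ℂ] H) : Prop :=
  ∀ m n : ℕ, m ≠ n → ⟪A (e m), e n⟫_ℂ = 0

def IsDiagonalProjection (e : HilbertBasis ℕ ℂ H) (P : H →L[ℂ] H) : Prop :=
  IsOrthogonalProjection P ∧ IsDiagonalOp e P

/-- Membership in the restricted unitary group `U_J(H) = U(H) ∩ (I + J)`. -/
def InRestrictedUnitary (J : Set (H →L[ℂ] H)) (U : H →L[ℂ] H) : Prop :=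
  U ∈ unitary (H →L[ℂ] H) ∧ U - 1 ∈ J

/-- `A` is `U_J(H)`-diagonalizable with respect to `e`. -/
def RestrictedDiagonalizable (e : HilbertBasis ℕ ℂ H) (J : Set (H →L[ℂ] H))
    (A : H →L[ℂ] H) : Prop :=
  ∃ U : H →L[ℂ] H, InRestrictedUnitary J U ∧ IsDiagonalOp e (U * A * star U)

/-- Convergence of the partial sums of the series `∑ T n` to `S` in the weak operator
topology. -/
def WOTSum (T : ℕ → H →L[ℂ] H) (S : H →L[ℂ] H) : Prop :=
  ∀ x y : H, Tendsto (fun N : ℕ => ∑ n ∈ Finset.range N, ⟪T n x, y⟫_ℂ)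
    atTop (nhds ⟪S x, y⟫_ℂ)

/-- Decomposition of the identity: mutually orthogonal self-adjoint projections summing
to the identity in the strong operator topology. -/
def IsDecompositionOfIdentity (P : ℕ → H →L[ℂ] H) : Prop :=
  (∀ n, IsOrthogonalProjection (P n)) ∧ (∀ m n, m ≠ n → P m * P n = 0) ∧
  (∀ x : H, HasSum (fun n => P n x) x)

/-- `A` is diagonalizable with infinite point spectrum, distinct eigenvalues `lam` and
spectral projections `P`. -/
def SpectralDataOf (A : H →L[ℂ] H) (lam : ℕ → ℂ) (P : ℕ → H →L[ℂ] H) : Prop :=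
  IsDecompositionOfIdentity P ∧ (∀ n, P n ≠ 0) ∧ Function.Injective lam ∧
  (∀ x : H, HasSum (fun n => lam n • P n x) (A x))

/-- Finite rank operator. -/
def IsFiniteRankOp (T : H →L[ℂ] H) : Prop :=
  FiniteDimensional ℂ (LinearMap.range (T : H →ₗ[ℂ] H))

/-- The `n`-th approximation number (= `(n+1)`-th singular value for compact operators). -/
noncomputable def sNum (T : H →L[ℂ] H) (n : ℕ) : ℝ :=
  sInf {c : ℝ | ∃ F : H →L[ℂ] H, IsFiniteRankOp F ∧
    Module.finrank ℂ (LinearMap.range (F : H →ₗ[ℂ] H)) ≤ n ∧ c = ‖T - F‖}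

/-- The arithmetic mean closure `J^{-am}` of an operator ideal. -/
def amClosure (J : Set (H →L[ℂ] H)) : Set (H →L[ℂ] H) :=
  {A | IsCompactOperator ⇑A ∧ ∃ B ∈ J, ∃ M : ℝ, 0 < M ∧ ∀ n : ℕ,
    (∑ k ∈ Finset.range (n + 1), sNum A k) ≤ M * (∑ k ∈ Finset.range (n + 1), sNum B k)}

/-- `(P, Q)` is a Fredholm pair of projections with essential codimension `[P : Q] = 0`. -/
def EssCodimZero (P Q : H →L[ℂ] H) : Prop :=
  IsClosed (⇑Q '' (LinearMap.range (P : H →ₗ[ℂ] H) : Set H)) ∧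
  FiniteDimensional ℂ
    ↥(LinearMap.ker (Q : H →ₗ[ℂ] H) ⊓ LinearMap.range (P : H →ₗ[ℂ] H)) ∧
  FiniteDimensional ℂ
    ↥(LinearMap.range (Q : H →ₗ[ℂ] H) ⊓ LinearMap.ker (P : H →ₗ[ℂ] H)) ∧
  Module.finrank ℂ
    ↥(LinearMap.ker (Q : H →ₗ[ℂ] H) ⊓ LinearMap.range (P : H →ₗ[ℂ] H)) =
  Module.finrank ℂ
    ↥(LinearMap.range (Q : H →ₗ[ℂ] H) ⊓ LinearMap.ker (P : H →ₗ[ℂ] H))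

/-- Hilbert–Schmidt operator. -/
def IsHilbertSchmidt (T : H →L[ℂ] H) : Prop :=
  ∀ b : HilbertBasis ℕ ℂ H, Summable (fun n => ‖T (b n)‖ ^ 2)

/-- Partial isometry: isometric on the orthogonal complement of its kernel. -/
def IsPartialIsometryOp (V : H →L[ℂ] H) : Prop :=
  ∀ x ∈ (LinearMap.ker (V : H →ₗ[ℂ] H))ᗮ, ‖V x‖ = ‖x‖


section AuxLemmas

set_option synthInstance.maxHeartbeats 1000000
set_option maxHeartbeats 2000000

lemma inner_star_mul_self_apply (T : H →L[ℂ] H) (x : H) :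
    ⟪(star T * T) x, x⟫_ℂ = ((‖T x‖ ^ 2 : ℝ) : ℂ) := by
  rw [ContinuousLinearMap.mul_apply, ContinuousLinearMap.star_eq_adjoint,
    ContinuousLinearMap.adjoint_inner_left, inner_self_eq_norm_sq_to_K]
  norm_cast

lemma norm_sqrt_apply_eq (C : H →L[ℂ] H) (hC : 0 ≤ C) (x : H) :
    ‖CFC.sqrt C x‖ ^ 2 = (⟪C x, x⟫_ℂ).re := by
  have hR : 0 ≤ CFC.sqrt C := CFC.sqrt_nonneg C
  have hRsa : star (CFC.sqrt C) = CFC.sqrt C := (IsSelfAdjoint.of_nonneg hR).star_eq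
  have h1 : star (CFC.sqrt C) * CFC.sqrt C = C := by
    rw [hRsa]; exact CFC.sqrt_mul_sqrt_self C hC
  have h2 := inner_star_mul_self_apply (CFC.sqrt C) x
  rw [h1] at h2
  rw [h2]
  norm_cast

/-- Douglas-type factorization: if `‖A x‖ ≤ ‖B x‖` pointwise, then `A = W * B`. -/
lemma exists_left_factor (A B : H →L[ℂ] H) (h : ∀ x, ‖A x‖ ≤ ‖B x‖) :
    ∃ W : H →L[ℂ] H, A = W * B := by
  classical
  have key : ∀ x y : H, B x = B y → A x = A y := by
    intro x y hxy
    have h2 := h (x - y)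
    rw [map_sub, map_sub, hxy, sub_self, norm_zero] at h2
    exact sub_eq_zero.mp (norm_le_zero_iff.mp h2)
  set Rng : Submodule ℂ H := LinearMap.range (B : H →ₗ[ℂ] H) with hRng
  set K : Submodule ℂ H := Rng.topologicalClosure with hK
  have memRng : ∀ x : H, B x ∈ Rng := fun x => LinearMap.mem_range.mpr ⟨x, rfl⟩
  have pre : ∀ v : Rng, ∃ x : H, B x = (v : H) := fun v => LinearMap.mem_range.mp v.2
  let p : Rng → H := fun v => (pre v).choose
  have hp : ∀ v : Rng, B (p v) = (v : H) := fun v => (pre v).choose_spec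
  let f₀ : Rng →ₗ[ℂ] H :=
    { toFun := fun v => A (p v)
      map_add' := by
        intro u v
        show A (p (u + v)) = A (p u) + A (p v)
        rw [← map_add]
        apply key
        rw [hp, map_add, hp, hp, Submodule.coe_add]
      map_smul' := by
        intro c v
        show A (p (c • v)) = c • A (p v)
        rw [← map_smul]
        apply key
        rw [hp, map_smul, hp, Submodule.coe_smul] }
  have hf₀ : ∀ v : Rng, f₀ v = A (p v) := fun _ => rfl
  let f : Rng →L[ℂ] H := f₀.mkContinuous 1 (by
    intro v
    rw [hf₀, one_mul]
    calc ‖A (p v)‖ ≤ ‖B (p v)‖ := h _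
    _ = ‖(v : H)‖ := by rw [hp]
    _ = ‖v‖ := rfl)
  have hf : ∀ v : Rng, f v = A (p v) := fun _ => rfl
  let e₀ : Rng →ₗ[ℂ] K := Submodule.inclusion Rng.le_topologicalClosure
  let e : Rng →L[ℂ] K := e₀.mkContinuous 1 (fun v => by rw [one_mul]; rfl)
  have he : ∀ v : Rng, ((e v : H)) = (v : H) := fun _ => rfl
  have h_e : IsUniformInducing e := by
    apply Isometry.isUniformInducing
    apply AddMonoidHomClass.isometry_of_norm
    intro v; rfl
  have h_dense : DenseRange e := by
    intro x
    rw [closure_subtype]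
    have himg : (Subtype.val '' Set.range e : Set H) = (Rng : Set H) := by
      ext z
      constructor
      · rintro ⟨w, ⟨v, rfl⟩, rfl⟩
        exact (he v) ▸ v.2
      · intro hz
        exact ⟨e ⟨z, hz⟩, ⟨⟨z, hz⟩, rfl⟩, he _⟩
    rw [himg, ← Submodule.topologicalClosure_coe]
    exact x.2
  let W₀ : K →L[ℂ] H := ContinuousLinearMap.extend (F := H) (Eₗ := ↥K) (𝕜 := ℂ)
    (𝕜₂ := ℂ) (σ₁₂ := RingHom.id ℂ) f e
  haveI : CompleteSpace K := Rng.isClosed_topologicalClosure.completeSpace_coe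
  refine ⟨W₀.comp (Submodule.orthogonalProjectionOnto K), ?_⟩
  ext x
  have hBK : B x ∈ K := Rng.le_topologicalClosure (memRng x)
  have hproj : Submodule.orthogonalProjectionOnto K (B x) = ⟨B x, hBK⟩ :=
    Submodule.orthogonalProjectionOnto_mem_subspace_eq_self (K := K) ⟨B x, hBK⟩
  have heq : (⟨B x, hBK⟩ : K) = e ⟨B x, memRng x⟩ := Subtype.ext rfl
  rw [ContinuousLinearMap.mul_apply]
  show A x = _
  rw [ContinuousLinearMap.comp_apply, hproj, heq, ContinuousLinearMap.extend_eq (h_dense := h_dense) (h_e := h_e), hf]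
  exact key _ _ (by rw [hp])

/-- Two-sided ideals of `B(H)` are closed under adjoints. -/
lemma star_mem_ideal {J : Set (H →L[ℂ] H)} (hJ : IsOpIdeal J)
    {T : H →L[ℂ] H} (hT : T ∈ J) : star T ∈ J := by
  set C : H →L[ℂ] H := star T * T with hCdef
  have hC : 0 ≤ C := star_mul_self_nonneg T
  set R : H →L[ℂ] H := CFC.sqrt C with hRdef
  have hRsa : star R = R := (IsSelfAdjoint.of_nonneg (CFC.sqrt_nonneg _)).star_eq
  have hnorm : ∀ x, ‖R x‖ = ‖T x‖ := by
    intro x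
    have h1 : ‖R x‖ ^ 2 = (⟪C x, x⟫_ℂ).re := norm_sqrt_apply_eq C hC x
    have h2 : ⟪C x, x⟫_ℂ = ((‖T x‖ ^ 2 : ℝ) : ℂ) := inner_star_mul_self_apply T x
    have h3 : ‖R x‖ ^ 2 = ‖T x‖ ^ 2 := by rw [h1, h2, Complex.ofReal_re]
    have h4 := congrArg Real.sqrt h3
    rwa [Real.sqrt_sq (norm_nonneg _), Real.sqrt_sq (norm_nonneg _)] at h4
  obtain ⟨W₁, hW₁⟩ := exists_left_factor R T (fun x => le_of_eq (hnorm x))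
  have hRJ : R ∈ J := hW₁ ▸ hJ.2.2.1 W₁ T hT
  obtain ⟨W₂, hW₂⟩ := exists_left_factor T R (fun x => le_of_eq (hnorm x).symm)
  have hTs : star T = R * star W₂ := by rw [hW₂, star_mul, hRsa]
  rw [hTs]
  exact hJ.2.2.2 R (star W₂) hRJ

/-- Ideals are hereditary: `0 ≤ A ≤ C ∈ J` implies `A ∈ J`. -/
lemma mem_ideal_of_le {J : Set (H →L[ℂ] H)} (hJ : IsOpIdeal J)
    {A C : H →L[ℂ] H} (hA : 0 ≤ A) (hAC : A ≤ C) (hC : C ∈ J) : A ∈ J := by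
  have hC0 : 0 ≤ C := le_trans hA hAC
  set RA : H →L[ℂ] H := CFC.sqrt A with hRAdef
  set RC : H →L[ℂ] H := CFC.sqrt C with hRCdef
  have hRAsa : star RA = RA := (IsSelfAdjoint.of_nonneg (CFC.sqrt_nonneg _)).star_eq
  have hRCsa : star RC = RC := (IsSelfAdjoint.of_nonneg (CFC.sqrt_nonneg _)).star_eq
  have hpos : (C - A).IsPositive := (ContinuousLinearMap.le_def A C).mp hAC
  have hle : ∀ x, ‖RA x‖ ≤ ‖RC x‖ := by
    intro x
    have h1 : ‖RA x‖ ^ 2 = (⟪A x, x⟫_ℂ).re := norm_sqrt_apply_eq A hA x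
    have h2 : ‖RC x‖ ^ 2 = (⟪C x, x⟫_ℂ).re := norm_sqrt_apply_eq C hC0 x
    have h3 : 0 ≤ (⟪(C - A) x, x⟫_ℂ).re := (Complex.nonneg_iff.mp (hpos.inner_nonneg_left x)).1
    rw [ContinuousLinearMap.sub_apply, inner_sub_left, Complex.sub_re] at h3
    have h4 : (⟪A x, x⟫_ℂ).re ≤ (⟪C x, x⟫_ℂ).re := by linarith
    have h5 : ‖RA x‖ ^ 2 ≤ ‖RC x‖ ^ 2 := by rw [h1, h2]; exact h4
    have h6 := Real.sqrt_le_sqrt h5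
    rwa [Real.sqrt_sq (norm_nonneg _), Real.sqrt_sq (norm_nonneg _)] at h6
  obtain ⟨W, hW⟩ := exists_left_factor RA RC hle
  have hfact : A = W * C * star W := by
    have h1 : A = RA * star RA := by
      rw [hRAsa]; exact (CFC.sqrt_mul_sqrt_self A hA).symm
    rw [h1, hW, star_mul, hRCsa, mul_assoc, ← mul_assoc RC RC (star W),
      CFC.sqrt_mul_sqrt_self C hC0, ← mul_assoc]
  rw [hfact]
  exact hJ.2.2.2 _ (star W) (hJ.2.2.1 W C hC)

lemma wotSum_add {T T' : ℕ → H →L[ℂ] H} {S S' : H →L[ℂ] H}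
    (h : WOTSum T S) (h' : WOTSum T' S') :
    WOTSum (fun n => T n + T' n) (S + S') := by
  intro x y
  have := (h x y).add (h' x y)
  simp only [← Finset.sum_add_distrib] at this
  simpa [ContinuousLinearMap.add_apply, inner_add_left] using this

lemma wotSum_star {T : ℕ → H →L[ℂ] H} {S : H →L[ℂ] H} (h : WOTSum T S) :
    WOTSum (fun n => star (T n)) (star S) := by
  have key : ∀ (U : H →L[ℂ] H) (x y : H), ⟪star U x, y⟫_ℂ = star ⟪U y, x⟫_ℂ := by
    intro U x y
    rw [ContinuousLinearMap.star_eq_adjoint, ContinuousLinearMap.adjoint_inner_left,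
      ← inner_conj_symm x (U y), starRingEnd_apply]
  intro x y
  have h1 := (h y x).star
  have h2 : (fun N : ℕ => star (∑ m ∈ Finset.range N, ⟪T m y, x⟫_ℂ)) =
      fun N : ℕ => ∑ m ∈ Finset.range N, ⟪star (T m) x, y⟫_ℂ := by
    funext N
    rw [star_sum]
    exact Finset.sum_congr rfl fun m _ => (key (T m) x y).symm
  rw [h2] at h1
  have h3 : ⟪star S x, y⟫_ℂ = star ⟪S y, x⟫_ℂ := key S x y
  rwa [← h3] at h1

/-- Extraction from a WOT-convergent series when all but one term is annihilated by a
right multiplier. -/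
lemma wotSum_mul_right_eq {T : ℕ → H →L[ℂ] H} {S : H →L[ℂ] H} (h : WOTSum T S)
    (R Z : H →L[ℂ] H) (n : ℕ) (h0 : ∀ m, m ≠ n → T m * R = 0) (hn : T n * R = Z) :
    S * R = Z := by
  refine ContinuousLinearMap.ext fun x => ext_inner_right ℂ fun y => ?_
  have h1 := h (R x) y
  have h2 : ∀ N, n < N → ∑ m ∈ Finset.range N, ⟪T m (R x), y⟫_ℂ = ⟪Z x, y⟫_ℂ := by
    intro N hN
    rw [Finset.sum_eq_single_of_mem n (Finset.mem_range.mpr hN)]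
    · rw [show T n (R x) = (T n * R) x from rfl, hn]
    · intro m _ hm
      rw [show T m (R x) = (T m * R) x from rfl, h0 m hm]
      simp
  have h3 : Tendsto (fun N : ℕ => ∑ m ∈ Finset.range N, ⟪T m (R x), y⟫_ℂ) atTop
      (nhds ⟪Z x, y⟫_ℂ) := by
    apply Tendsto.congr' _ tendsto_const_nhds
    filter_upwards [eventually_gt_atTop n] with N hN
    exact (h2 N hN).symm
  exact (tendsto_nhds_unique h1 h3 : _)

end AuxLemmas

/-- Lemma: the differences `P n - E n` belong to the ideal. -/
theorem differences_in_ideal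
    (e : HilbertBasis ℕ ℂ H) (J : Set (H →L[ℂ] H)) (hJ : IsProperOpIdeal J)
    (P : ℕ → H →L[ℂ] H) (hP : IsDecompositionOfIdentity P)
    (E : ℕ → H →L[ℂ] H) (hE : ∀ n, IsDiagonalProjection e (E n))
    (S₁ S₂ : H →L[ℂ] H)
    (h₁ : WOTSum (fun n => (1 - E n) * P n) S₁) (hS₁ : S₁ ∈ J)
    (h₂ : WOTSum (fun n => E n * (1 - P n)) S₂) (hS₂ : S₂ ∈ J) :
    ∀ n, P n - E n ∈ J := by
  have hJI : IsOpIdeal J := hJ.1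
  have hPsa : ∀ m, IsSelfAdjoint (P m) := fun m => (hP.1 m).1
  have hPidem : ∀ m, P m * P m = P m := fun m => (hP.1 m).2
  have hPorth : ∀ m k, m ≠ k → P m * P k = 0 := hP.2.1
  have hEsa : ∀ m, IsSelfAdjoint (E m) := fun m => (hE m).1.1
  have hEidem : ∀ m, E m * E m = E m := fun m => (hE m).1.2
  have hDsa : ∀ m, star (P m - E m) = P m - E m := fun m => by
    rw [star_sub, (hPsa m).star_eq, (hEsa m).star_eq]
  set Q : ℕ → H →L[ℂ] H := fun m => (P m - E m) * (P m - E m) with hQdef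
  have hQsa : ∀ m, star (Q m) = Q m := fun m => by
    rw [hQdef, star_mul, hDsa m]
  have hQinner : ∀ m x, ⟪Q m x, x⟫_ℂ = ((‖(P m - E m) x‖ ^ 2 : ℝ) : ℂ) := by
    intro m x
    have h := inner_star_mul_self_apply (P m - E m) x
    rwa [hDsa m] at h
  intro n
  -- Step 1: X = (1 - E n) * P n ∈ J by extraction from the first series
  set X : H →L[ℂ] H := (1 - E n) * P n with hXdef
  have hX : S₁ * P n = X := by
    apply wotSum_mul_right_eq h₁ (P n) X n
    · intro m hm
      rw [mul_assoc, hPorth m n hm, mul_zero]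
    · rw [mul_assoc, hPidem n]
  have hXJ : X ∈ J := hX ▸ hJI.2.2.2 S₁ (P n) hS₁
  have hXsJ : star X ∈ J := star_mem_ideal hJI hXJ
  -- Step 2: the full symmetrized series sums to S_tot ∈ J, with terms Q m + Q m
  set S_tot : H →L[ℂ] H := S₁ + S₂ + star S₁ + star S₂ with hStot
  have hStotJ : S_tot ∈ J :=
    hJI.2.1 _ _ (hJI.2.1 _ _ (hJI.2.1 _ _ hS₁ hS₂) (star_mem_ideal hJI hS₁))
      (star_mem_ideal hJI hS₂)
  have hsum : WOTSum (fun m => Q m + Q m) S_tot := by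
    have w := wotSum_add (wotSum_add (wotSum_add h₁ h₂) (wotSum_star h₁)) (wotSum_star h₂)
    have hfe : (fun m => ((1 - E m) * P m + E m * (1 - P m) + star ((1 - E m) * P m))
        + star (E m * (1 - P m))) = fun m => Q m + Q m := by
      funext m
      have a1 : star ((1 - E m) * P m) = P m * (1 - E m) := by
        rw [star_mul, (hPsa m).star_eq, star_sub, star_one, (hEsa m).star_eq]
      have a2 : star (E m * (1 - P m)) = (1 - P m) * E m := by
        rw [star_mul, (hEsa m).star_eq, star_sub, star_one, (hPsa m).star_eq]
      rw [a1, a2, hQdef]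
      simp only [mul_sub, sub_mul, mul_one, one_mul, hPidem m, hEidem m]
      abel
    rw [← hfe]
    exact w
  -- Step 3: positivity, monotone comparison
  have hposQ : 0 ≤ Q n + Q n := by
    rw [ContinuousLinearMap.nonneg_iff_isPositive]
    refine ⟨?_, ?_⟩
    · rw [← ContinuousLinearMap.isSelfAdjoint_iff_isSymmetric]; show star (Q n + Q n) = Q n + Q n
      rw [star_add, hQsa n]
    · intro x
      have : (⟪(Q n + Q n) x, x⟫_ℂ).re = 2 * ‖(P n - E n) x‖ ^ 2 := by
        rw [ContinuousLinearMap.add_apply, inner_add_left, hQinner n x]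
        norm_cast
        ring
      simp only [ContinuousLinearMap.reApplyInnerSelf]
      rw [show RCLike.re ⟪(Q n + Q n) x, x⟫_ℂ = (⟪(Q n + Q n) x, x⟫_ℂ).re from rfl, this]
      positivity
  have hle : Q n + Q n ≤ S_tot := by
    rw [ContinuousLinearMap.le_def]
    refine ⟨?_, ?_⟩
    · rw [← ContinuousLinearMap.isSelfAdjoint_iff_isSymmetric]; show star (S_tot - (Q n + Q n)) = S_tot - (Q n + Q n)
      rw [hStot]
      simp only [star_sub, star_add, star_star, hQsa n]
      abel
    · intro x
      have hlim := hsum x x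
      have hterm : ∀ m, ⟪(Q m + Q m) x, x⟫_ℂ = ((2 * ‖(P m - E m) x‖ ^ 2 : ℝ) : ℂ) := by
        intro m
        rw [ContinuousLinearMap.add_apply, inner_add_left, hQinner m x]
        norm_cast
        ring
      set g : ℕ → ℝ := fun N => ∑ m ∈ Finset.range N, 2 * ‖(P m - E m) x‖ ^ 2 with hg
      have hfg : (fun N : ℕ => ∑ m ∈ Finset.range N, ⟪(Q m + Q m) x, x⟫_ℂ) =
          fun N : ℕ => ((g N : ℝ) : ℂ) := by
        funext N
        rw [hg]
        simp only [hterm]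
        push_cast
        ring
      rw [hfg] at hlim
      have hre : Tendsto g atTop (nhds ((⟪S_tot x, x⟫_ℂ).re)) := by
        have h := (Complex.continuous_re.tendsto _).comp hlim
        simpa [Function.comp_def] using h
      have hbound : 2 * ‖(P n - E n) x‖ ^ 2 ≤ (⟪S_tot x, x⟫_ℂ).re := by
        apply ge_of_tendsto hre
        filter_upwards [eventually_gt_atTop n] with N hN
        exact Finset.single_le_sum (f := fun m => 2 * ‖(P m - E m) x‖ ^ 2)
          (fun m _ => by positivity) (Finset.mem_range.mpr hN)
      simp only [ContinuousLinearMap.reApplyInnerSelf]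
      rw [show RCLike.re ⟪(S_tot - (Q n + Q n)) x, x⟫_ℂ =
        (⟪(S_tot - (Q n + Q n)) x, x⟫_ℂ).re from rfl]
      rw [ContinuousLinearMap.sub_apply, inner_sub_left, Complex.sub_re, hterm n]
      rw [Complex.ofReal_re]
      linarith
  -- Step 4: conclude Q n ∈ J
  have hQ2J : Q n + Q n ∈ J := mem_ideal_of_le hJI hposQ hle hStotJ
  have hQJ : Q n ∈ J := by
    have heq : ((1 / 2 : ℂ) • (1 : H →L[ℂ] H)) * (Q n + Q n) = Q n := by
      rw [smul_mul_assoc, one_mul, smul_add, ← add_smul]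
      norm_num
    exact heq ▸ hJI.2.2.1 _ _ hQ2J
  -- Step 5: assemble
  have hneg : ∀ {G : H →L[ℂ] H}, G ∈ J → -G ∈ J := by
    intro G hG
    have : -G = ((-1 : ℂ) • (1 : H →L[ℂ] H)) * G := by
      rw [smul_mul_assoc, one_mul, neg_smul, one_smul]
    rw [this]
    exact hJI.2.2.1 _ _ hG
  have hstarX : star X = P n * (1 - E n) := by
    rw [hXdef, star_mul, (hPsa n).star_eq, star_sub, star_one, (hEsa n).star_eq]
  have hkey : P n - E n = X + star X + -(Q n) := by
    rw [hstarX, hXdef, hQdef]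
    simp only [mul_sub, sub_mul, mul_one, one_mul, hPidem n, hEidem n]
    abel
  rw [hkey]
  exact hJI.2.1 _ _ (hJI.2.1 _ _ hXJ hXsJ) (hneg hQJ)

end
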